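/- Let m ≥ 1 and let T be an invertible m×m complex matrix with polar decomposition T = U·P, where U is unitary and P = (T*T)^{1/2} has spectral decomposition P = Σ_{i=1}^{k} s_i E_i with s_i > 0 and Hermitian idempotent matrices E_i satisfying E_iE_j = 0 for i ≠ j and Σ_i E_i = I. Let μ be a probability measure on [0,1] and P_μ(s,t) := ∫_{[0,1]} ((1−λ)s⁻¹ + λt⁻¹)⁻¹ dμ(λ). Then ‖ Σ_{i,j=1}^{k} P_μ(s_i, s_j) E_i U E_j ‖ ≤ ‖T‖, where ‖·‖ denotes the operator norm with respect to the Euclidean norm on ℂ^m (the spectral norm). -/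

import Mathlib

open MeasureTheory Matrix
open scoped ComplexOrder
open Set
set_option maxHeartbeats 1000000
set_option maxHeartbeats 1000000
open scoped InnerProductSpace

lemma integral_exp_neg_mul_Ioi' {b : ℝ} (hb : 0 < b) :
    ∫ u in Ioi (0:ℝ), Real.exp (-(b * u)) = b⁻¹ := by
  have h := MeasureTheory.integral_comp_mul_left_Ioi (fun x => Real.exp (-x)) 0 hb
  simp only [mul_zero] at h
  rw [show (fun u => Real.exp (-(b*u))) = (fun u => (fun x => Real.exp (-x)) (b*u)) from rfl] at *
  rw [h, integral_exp_neg_Ioi_zero]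
  simp

variable {m k : ℕ}

lemma proj_inner (N : Fin k → (EuclideanSpace ℂ (Fin m) →L[ℂ] EuclideanSpace ℂ (Fin m)))
    (hadj : ∀ i, ContinuousLinearMap.adjoint (N i) = N i)
    (horth : ∀ i j, N i * N j = if i = j then N i else 0)
    (y z : EuclideanSpace ℂ (Fin m)) (i j : Fin k) :
    ⟪N i y, N j z⟫_ℂ = if i = j then ⟪y, N i z⟫_ℂ else 0 := by
  have h1 : ⟪N i y, N j z⟫_ℂ = ⟪y, (N i * N j) z⟫_ℂ := by
    rw [ContinuousLinearMap.mul_apply]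
    conv_lhs => rw [← hadj i]
    exact ContinuousLinearMap.adjoint_inner_left _ _ _
  rw [h1, horth]
  split
  · rfl
  · simp

lemma inner_proj_self (N : Fin k → (EuclideanSpace ℂ (Fin m) →L[ℂ] EuclideanSpace ℂ (Fin m)))
    (hadj : ∀ i, ContinuousLinearMap.adjoint (N i) = N i)
    (horth : ∀ i j, N i * N j = if i = j then N i else 0)
    (y : EuclideanSpace ℂ (Fin m)) (i : Fin k) :
    ⟪y, N i y⟫_ℂ = ((‖N i y‖:ℂ))^2 := by
  have := proj_inner N hadj horth y y i i
  rw [if_pos rfl] at this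
  rw [← this, inner_self_eq_norm_sq_to_K]
  norm_cast

lemma proj_sum_norm_sq (N : Fin k → (EuclideanSpace ℂ (Fin m) →L[ℂ] EuclideanSpace ℂ (Fin m)))
    (hadj : ∀ i, ContinuousLinearMap.adjoint (N i) = N i)
    (horth : ∀ i j, N i * N j = if i = j then N i else 0)
    (hsum : (∑ i, N i) = 1)
    (y : EuclideanSpace ℂ (Fin m)) :
    ∑ i, ‖N i y‖^2 = ‖y‖^2 := by
  have h : ((‖y‖:ℂ))^2 = ∑ i, ((‖N i y‖:ℂ))^2 := by
    calc ((‖y‖:ℂ))^2 = ⟪y, y⟫_ℂ := (inner_self_eq_norm_sq_to_K y).symm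
    _ = ⟪y, (∑ i, N i) y⟫_ℂ := by rw [hsum]; rfl
    _ = ∑ i, ⟪y, N i y⟫_ℂ := by rw [ContinuousLinearMap.sum_apply, inner_sum]
    _ = ∑ i, ((‖N i y‖:ℂ))^2 := by
        exact Finset.sum_congr rfl fun i _ => inner_proj_self N hadj horth y i
  exact_mod_cast h.symm

lemma proj_sum_norm_le (N : Fin k → (EuclideanSpace ℂ (Fin m) →L[ℂ] EuclideanSpace ℂ (Fin m)))
    (hadj : ∀ i, ContinuousLinearMap.adjoint (N i) = N i)
    (horth : ∀ i j, N i * N j = if i = j then N i else 0)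
    (hsum : (∑ i, N i) = 1)
    (c : Fin k → ℝ) (hc : ∀ i, 0 ≤ c i) {C : ℝ} (hC : 0 ≤ C)
    (hcC : ∀ i, N i ≠ 0 → c i ≤ C)
    (y : EuclideanSpace ℂ (Fin m)) :
    ‖∑ i, ((c i : ℂ)) • N i y‖ ≤ C * ‖y‖ := by
  have h0 : ⟪∑ i, ((c i : ℂ)) • N i y, ∑ i, ((c i : ℂ)) • N i y⟫_ℂ
      = ∑ i, (((c i)^2 * (‖N i y‖)^2 : ℝ) : ℂ) := by
    rw [sum_inner]
    refine Finset.sum_congr rfl fun i _ => ?_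
    rw [inner_sum, Finset.sum_eq_single i]
    · rw [inner_smul_left, inner_smul_right, proj_inner N hadj horth y y i i,
        if_pos rfl, inner_proj_self N hadj horth y i]
      rw [Complex.conj_ofReal]
      push_cast
      ring
    · intro j _ hj
      rw [inner_smul_left, inner_smul_right, proj_inner N hadj horth y y i j,
        if_neg (Ne.symm hj)]
      simp
    · simp
  have hre : ‖∑ i, ((c i : ℂ)) • N i y‖^2 = ∑ i, (c i)^2 * ‖N i y‖^2 := by
    have h1 := inner_self_eq_norm_sq (𝕜 := ℂ) (∑ i, ((c i : ℂ)) • N i y)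
    rw [h0] at h1
    rw [← h1, show ∑ i, (((c i)^2 * (‖N i y‖)^2 : ℝ) : ℂ)
      = (((∑ i, (c i)^2 * (‖N i y‖)^2 : ℝ)) : ℂ) by push_cast; ring]
    exact (RCLike.ofReal_re (K := ℂ) _).symm
  have hsq : ‖∑ i, ((c i : ℂ)) • N i y‖^2 ≤ (C * ‖y‖)^2 := by
    rw [hre]
    calc ∑ i, (c i)^2 * ‖N i y‖^2 ≤ ∑ i, C^2 * ‖N i y‖^2 := by
          refine Finset.sum_le_sum fun i _ => ?_
          by_cases hNi : N i = 0
          · simp [hNi]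
          · have h1 := hcC i hNi
            have h2 : (c i)^2 ≤ C^2 := by nlinarith [hc i]
            nlinarith [sq_nonneg ‖N i y‖]
    _ = C^2 * ‖y‖^2 := by rw [← Finset.mul_sum, proj_sum_norm_sq N hadj horth hsum]
    _ = (C * ‖y‖)^2 := by ring
  nlinarith [norm_nonneg (∑ i, ((c i : ℂ)) • N i y), mul_nonneg hC (norm_nonneg y)]

lemma core (S : ℝ) (hS : 0 < S)
    (V : EuclideanSpace ℂ (Fin m) →L[ℂ] EuclideanSpace ℂ (Fin m))
    (hV : ∀ x, ‖V x‖ = ‖x‖)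
    (N : Fin k → (EuclideanSpace ℂ (Fin m) →L[ℂ] EuclideanSpace ℂ (Fin m)))
    (hadj : ∀ i, ContinuousLinearMap.adjoint (N i) = N i)
    (horth : ∀ i j, N i * N j = if i = j then N i else 0)
    (hsum : (∑ i, N i) = 1)
    (s : Fin k → ℝ) (hs : ∀ i, 0 < s i) (hsS : ∀ i, N i ≠ 0 → s i ≤ S)
    (lam : ℝ) (hl0 : 0 ≤ lam) (hl1 : lam ≤ 1) :
    ‖∑ i, ∑ j, ((((1 - lam) * (s i)⁻¹ + lam * (s j)⁻¹)⁻¹ : ℝ) : ℂ) • (N i * V * N j)‖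
      ≤ S := by
  have hpq : ∀ i j : Fin k, 0 < (1 - lam) * (s i)⁻¹ + lam * (s j)⁻¹ := by
    intro i j
    have h1 : 0 < (s i)⁻¹ := inv_pos.mpr (hs i)
    have h2 : 0 < (s j)⁻¹ := inv_pos.mpr (hs j)
    rcases lt_or_eq_of_le hl1 with h | h
    · nlinarith [mul_pos (by linarith : (0:ℝ) < 1 - lam) h1, mul_nonneg hl0 h2.le]
    · rw [h]; simpa using h2
  -- inner product expansion and integral representation
  set X := ∑ i, ∑ j, ((((1 - lam) * (s i)⁻¹ + lam * (s j)⁻¹)⁻¹ : ℝ) : ℂ) • (N i * V * N j)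
    with hX
  have key : ∀ x y : EuclideanSpace ℂ (Fin m), ‖(⟪y, X x⟫_ℂ)‖ ≤ S * (‖y‖ * ‖x‖) := by
    intro x y
    have hNy : ∀ (i : Fin k) (w : EuclideanSpace ℂ (Fin m)), ⟪N i y, w⟫_ℂ = ⟪y, N i w⟫_ℂ := by
      intro i w
      conv_lhs => rw [← hadj i]
      exact ContinuousLinearMap.adjoint_inner_left _ _ _
    have expand : ⟪y, X x⟫_ℂ = ∑ i, ∑ j,
        ((((1 - lam) * (s i)⁻¹ + lam * (s j)⁻¹)⁻¹ : ℝ) : ℂ) * ⟪N i y, V (N j x)⟫_ℂ := by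
      rw [hX]
      rw [ContinuousLinearMap.sum_apply, inner_sum]
      refine Finset.sum_congr rfl fun i _ => ?_
      rw [ContinuousLinearMap.sum_apply, inner_sum]
      refine Finset.sum_congr rfl fun j _ => ?_
      rw [ContinuousLinearMap.smul_apply, inner_smul_right, hNy]
      congr 1
    -- the integrand
    set g : ℝ → ℂ := fun u => ⟪∑ i, ((Real.exp (-((1 - lam) * (s i)⁻¹) * u)):ℂ) • N i y,
        V (∑ j, ((Real.exp (-(lam * (s j)⁻¹) * u)):ℂ) • N j x)⟫_ℂ with hgdef
    have hg : ∀ u : ℝ, g u = ∑ i, ∑ j,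
        ((Real.exp (-((1 - lam) * (s i)⁻¹ + lam * (s j)⁻¹) * u)):ℂ) * ⟪N i y, V (N j x)⟫_ℂ := by
      intro u
      rw [hgdef]
      beta_reduce
      rw [sum_inner]
      refine Finset.sum_congr rfl fun i _ => ?_
      rw [inner_smul_left, Complex.conj_ofReal, _root_.map_sum, inner_sum, Finset.mul_sum]
      refine Finset.sum_congr rfl fun j _ => ?_
      rw [_root_.map_smul, inner_smul_right, ← mul_assoc, ← Complex.ofReal_mul, ← Real.exp_add]
      congr 3
      ring
    have swap : ⟪y, X x⟫_ℂ = ∫ u in Ioi (0:ℝ), g u := by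
      rw [expand]
      have hterm : ∀ i j : Fin k, ((((1 - lam) * (s i)⁻¹ + lam * (s j)⁻¹)⁻¹ : ℝ) : ℂ)
          * ⟪N i y, V (N j x)⟫_ℂ
          = ∫ u in Ioi (0:ℝ),
              ((Real.exp (-((1 - lam) * (s i)⁻¹ + lam * (s j)⁻¹) * u)):ℂ) * ⟪N i y, V (N j x)⟫_ℂ := by
        intro i j
        rw [MeasureTheory.integral_mul_const]
        congr 1
        have hcast : (∫ u in Ioi (0:ℝ),
              ((Real.exp (-((1 - lam) * (s i)⁻¹ + lam * (s j)⁻¹) * u)):ℂ))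
            = (((∫ u in Ioi (0:ℝ),
              Real.exp (-((1 - lam) * (s i)⁻¹ + lam * (s j)⁻¹) * u)) : ℝ) : ℂ) :=
          integral_ofReal
        rw [hcast]
        norm_cast
        rw [show (fun u => Real.exp (-((1 - lam) * (s i)⁻¹ + lam * (s j)⁻¹) * u))
            = (fun u => Real.exp (-(((1 - lam) * (s i)⁻¹ + lam * (s j)⁻¹) * u))) by
          funext u; ring_nf]
        exact (integral_exp_neg_mul_Ioi' (hpq i j)).symm
      have hintg : ∀ i j : Fin k, MeasureTheory.Integrable
          (fun u => ((Real.exp (-((1 - lam) * (s i)⁻¹ + lam * (s j)⁻¹) * u)):ℂ) * ⟪N i y, V (N j x)⟫_ℂ)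
          (MeasureTheory.volume.restrict (Ioi (0:ℝ))) := by
        intro i j
        have h1 : MeasureTheory.IntegrableOn
            (fun u => Real.exp (-((1 - lam) * (s i)⁻¹ + lam * (s j)⁻¹) * u)) (Ioi (0:ℝ)) :=
          exp_neg_integrableOn_Ioi 0 (hpq i j)
        exact (h1.ofReal.mul_const _)
      simp_rw [hterm]
      calc ∑ i, ∑ j, ∫ u in Ioi (0:ℝ),
              ((Real.exp (-((1 - lam) * (s i)⁻¹ + lam * (s j)⁻¹) * u)):ℂ) * ⟪N i y, V (N j x)⟫_ℂ
          = ∑ i, ∫ u in Ioi (0:ℝ), ∑ j,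
              ((Real.exp (-((1 - lam) * (s i)⁻¹ + lam * (s j)⁻¹) * u)):ℂ) * ⟪N i y, V (N j x)⟫_ℂ :=
            Finset.sum_congr rfl fun i _ =>
              (MeasureTheory.integral_finset_sum _ (fun j _ => hintg i j)).symm
        _ = ∫ u in Ioi (0:ℝ), ∑ i, ∑ j,
              ((Real.exp (-((1 - lam) * (s i)⁻¹ + lam * (s j)⁻¹) * u)):ℂ) * ⟪N i y, V (N j x)⟫_ℂ :=
            (MeasureTheory.integral_finset_sum _ (fun i _ =>
              MeasureTheory.integrable_finset_sum _ (fun j _ => hintg i j))).symm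
        _ = ∫ u in Ioi (0:ℝ), g u :=
            MeasureTheory.integral_congr_ae
              (Filter.Eventually.of_forall fun u => (hg u).symm)

    -- pointwise bound on the integrand
    have hgbnd : ∀ u : ℝ, u ∈ Ioi (0:ℝ) →
        ‖g u‖ ≤ Real.exp (-(S⁻¹ * u)) * (‖y‖ * ‖x‖) := by
      intro u hu
      have hu0 : 0 ≤ u := (le_of_lt hu)
      have h1 : ‖∑ i, ((Real.exp (-((1 - lam) * (s i)⁻¹) * u)):ℂ) • N i y‖
          ≤ Real.exp (-((1 - lam) * S⁻¹) * u) * ‖y‖ := by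
        refine proj_sum_norm_le N hadj horth hsum _ (fun i => (Real.exp_pos _).le)
          (Real.exp_pos _).le (fun i hNi => ?_) y
        have hsi := hsS i hNi
        have : (1 - lam) * S⁻¹ ≤ (1 - lam) * (s i)⁻¹ :=
          mul_le_mul_of_nonneg_left (inv_anti₀ (hs i) hsi) (by linarith)
        exact Real.exp_le_exp.mpr (by nlinarith)
      have h2 : ‖∑ j, ((Real.exp (-(lam * (s j)⁻¹) * u)):ℂ) • N j x‖
          ≤ Real.exp (-(lam * S⁻¹) * u) * ‖x‖ := by
        refine proj_sum_norm_le N hadj horth hsum _ (fun j => (Real.exp_pos _).le)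
          (Real.exp_pos _).le (fun j hNj => ?_) x
        have hsj := hsS j hNj
        have : lam * S⁻¹ ≤ lam * (s j)⁻¹ :=
          mul_le_mul_of_nonneg_left (inv_anti₀ (hs j) hsj) hl0
        exact Real.exp_le_exp.mpr (by nlinarith)
      have hcs : ‖g u‖ ≤ ‖∑ i, ((Real.exp (-((1 - lam) * (s i)⁻¹) * u)):ℂ) • N i y‖
          * ‖∑ j, ((Real.exp (-(lam * (s j)⁻¹) * u)):ℂ) • N j x‖ := by
        rw [hgdef]
        beta_reduce
        refine le_trans (norm_inner_le_norm _ _) ?_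
        rw [hV]
      calc ‖g u‖ ≤ _ := hcs
      _ ≤ (Real.exp (-((1 - lam) * S⁻¹) * u) * ‖y‖) * (Real.exp (-(lam * S⁻¹) * u) * ‖x‖) := by
          exact mul_le_mul h1 h2 (norm_nonneg _) (by positivity)
      _ = Real.exp (-(S⁻¹ * u)) * (‖y‖ * ‖x‖) := by
          rw [show Real.exp (-(S⁻¹ * u)) = Real.exp (-((1 - lam) * S⁻¹) * u)
              * Real.exp (-(lam * S⁻¹) * u) by rw [← Real.exp_add]; congr 1; ring]
          ring
    -- integrate the bound
    have hnorm : ‖⟪y, X x⟫_ℂ‖ ≤ S * (‖y‖ * ‖x‖) := by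
      rw [swap]
      refine le_trans (MeasureTheory.norm_integral_le_integral_norm _) ?_
      have hmono : (∫ u in Ioi (0:ℝ), ‖g u‖)
          ≤ ∫ u in Ioi (0:ℝ), Real.exp (-(S⁻¹ * u)) * (‖y‖ * ‖x‖) := by
        have hint2 : MeasureTheory.IntegrableOn
            (fun u => Real.exp (-(S⁻¹ * u)) * (‖y‖ * ‖x‖)) (Ioi (0:ℝ)) := by
          have h := (exp_neg_integrableOn_Ioi (0:ℝ) (inv_pos.mpr hS)).mul_const (‖y‖ * ‖x‖)
          simp only [neg_mul] at h
          exact h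
        refine MeasureTheory.integral_mono_of_nonneg
          (Filter.Eventually.of_forall fun u => norm_nonneg _) hint2 ?_
        filter_upwards [MeasureTheory.self_mem_ae_restrict measurableSet_Ioi] with u hu
        exact hgbnd u hu
      refine le_trans hmono ?_
      rw [MeasureTheory.integral_mul_const, integral_exp_neg_mul_Ioi' (inv_pos.mpr hS), inv_inv]
    exact hnorm
  -- conclude the operator norm bound
  refine ContinuousLinearMap.opNorm_le_bound _ hS.le fun x => ?_
  by_cases h0 : ‖X x‖ = 0
  · rw [h0]; positivity
  · have hk := key x (X x)
    have hinner : ⟪X x, X x⟫_ℂ = ((‖X x‖:ℂ))^2 := inner_self_eq_norm_sq_to_K _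
    rw [hinner] at hk
    have hnn : ‖((‖X x‖:ℂ))^2‖ = ‖X x‖^2 := by
      rw [norm_pow, Complex.norm_real, Real.norm_eq_abs, abs_of_nonneg (norm_nonneg _)]
    rw [hnn] at hk
    have hpos : 0 < ‖X x‖ := lt_of_le_of_ne (norm_nonneg _) (Ne.symm h0)
    nlinarith

/-- With `T = U·P` the polar decomposition of an invertible matrix,
`P = Σᵢ sᵢ Eᵢ` a spectral decomposition and `μ` a probability measure on `[0,1]`, the
generalized Aluthge transformation `Σᵢⱼ P_μ(sᵢ,sⱼ) Eᵢ U Eⱼ` has spectral norm at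
most `‖T‖` (operator norm w.r.t. the Euclidean norm on `ℂ^m`). -/
theorem stmt_6 (m : ℕ) (hm : 1 ≤ m) (T : Matrix (Fin m) (Fin m) ℂ) (hT : IsUnit T.det)
    (U P : Matrix (Fin m) (Fin m) ℂ)
    (hU : U ∈ Matrix.unitaryGroup (Fin m) ℂ)
    (hP : P.PosSemidef) (hP2 : P * P = Tᴴ * T) (hpolar : T = U * P)
    (k : ℕ) (s : Fin k → ℝ) (hs : ∀ i, 0 < s i)
    (E : Fin k → Matrix (Fin m) (Fin m) ℂ)
    (hEherm : ∀ i, (E i).IsHermitian) (hEidem : ∀ i, E i * E i = E i)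
    (hEorth : ∀ i j, i ≠ j → E i * E j = 0) (hEsum : ∑ i, E i = 1)
    (hPdec : P = ∑ i, (s i : ℂ) • E i)
    (μ : Measure ℝ) [IsProbabilityMeasure μ] (hμ : μ (Set.Icc (0 : ℝ) 1) = 1) :
    ‖Matrix.toEuclideanCLM (𝕜 := ℂ)
        (∑ i, ∑ j,
          ((∫ lam in Set.Icc (0 : ℝ) 1,
              ((1 - lam) * (s i)⁻¹ + lam * (s j)⁻¹)⁻¹ ∂μ : ℝ) : ℂ) • (E i * U * E j))‖ ≤
      ‖Matrix.toEuclideanCLM (𝕜 := ℂ) T‖ := by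
  have hne : Nonempty (Fin m) := Fin.pos_iff_nonempty.mp hm
  set V := Matrix.toEuclideanCLM (𝕜 := ℂ) U with hVdef
  set N : Fin k → (EuclideanSpace ℂ (Fin m) →L[ℂ] EuclideanSpace ℂ (Fin m)) :=
    fun i => Matrix.toEuclideanCLM (𝕜 := ℂ) (E i) with hNdef
  set S := ‖Matrix.toEuclideanCLM (𝕜 := ℂ) T‖ with hSdef
  have hadj : ∀ i, ContinuousLinearMap.adjoint (N i) = N i := by
    intro i
    rw [← ContinuousLinearMap.star_eq_adjoint]
    show star (Matrix.toEuclideanCLM (𝕜 := ℂ) (E i)) = Matrix.toEuclideanCLM (𝕜 := ℂ) (E i)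
    rw [← map_star]
    congr 1
    rw [Matrix.star_eq_conjTranspose, hEherm i]
  have horth : ∀ i j, N i * N j = if i = j then N i else 0 := by
    intro i j
    show Matrix.toEuclideanCLM (𝕜 := ℂ) (E i) * Matrix.toEuclideanCLM (𝕜 := ℂ) (E j) = _
    rw [← _root_.map_mul]
    by_cases h : i = j
    · subst h; rw [hEidem i, if_pos rfl]
    · rw [hEorth i j h, if_neg h, map_zero]
  have hsum : (∑ i, N i) = 1 := by
    show (∑ i, Matrix.toEuclideanCLM (𝕜 := ℂ) (E i)) = 1
    rw [← map_sum, hEsum, _root_.map_one]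
  have hVnorm : ∀ x, ‖V x‖ = ‖x‖ := by
    have hU1 : star U * U = 1 := Matrix.mem_unitaryGroup_iff'.mp hU
    have hV1 : star V * V = 1 := by
      rw [hVdef, ← map_star, ← _root_.map_mul, hU1, _root_.map_one]
    intro x
    have h3 : ContinuousLinearMap.adjoint V (V x) = x := by
      rw [← ContinuousLinearMap.star_eq_adjoint, ← ContinuousLinearMap.mul_apply, hV1,
        ContinuousLinearMap.one_apply]
    have h4 := ContinuousLinearMap.adjoint_inner_left V x (V x)
    rw [h3] at h4
    have h6 : ‖V x‖^2 = ‖x‖^2 := by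
      rw [← inner_self_eq_norm_sq (𝕜 := ℂ), ← h4, inner_self_eq_norm_sq]
    nlinarith [norm_nonneg (V x), norm_nonneg x]
  have hS0 : (0:ℝ) < S := by
    rw [hSdef, norm_pos_iff]
    intro h
    have hT0 : T = (Matrix.toEuclideanCLM (𝕜 := ℂ)).symm (Matrix.toEuclideanCLM (𝕜 := ℂ) T) :=
      (StarAlgEquiv.symm_apply_apply _ _).symm
    rw [h, map_zero] at hT0
    rw [hT0, Matrix.det_zero] at hT
    exact not_isUnit_zero hT
  have hsS : ∀ i, N i ≠ 0 → s i ≤ S := by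
    intro i hNi
    have hex : ∃ v, N i v ≠ 0 := by
      by_contra hcon
      push_neg at hcon
      exact hNi (ContinuousLinearMap.ext fun v => by rw [hcon v]; rfl)
    obtain ⟨v, hv⟩ := hex
    have hPE : P * E i = (s i : ℂ) • E i := by
      rw [hPdec, Finset.sum_mul, Finset.sum_eq_single i]
      · rw [smul_mul_assoc, hEidem i]
      · intro j _ hj; rw [smul_mul_assoc, hEorth j i hj, smul_zero]
      · simp
    have hTE : T * E i = (s i : ℂ) • (U * E i) := by
      rw [hpolar, mul_assoc, hPE, mul_smul_comm]
    have hclm := congrArg (Matrix.toEuclideanCLM (𝕜 := ℂ)) hTE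
    rw [_root_.map_mul, _root_.map_smul, _root_.map_mul] at hclm
    have happ : (Matrix.toEuclideanCLM (𝕜 := ℂ) T * N i) v
        = ((s i : ℂ) • (V * N i)) v := by rw [hclm]
    rw [ContinuousLinearMap.mul_apply, ContinuousLinearMap.smul_apply,
      ContinuousLinearMap.mul_apply] at happ
    have h1 : ‖Matrix.toEuclideanCLM (𝕜 := ℂ) T (N i v)‖ ≤ S * ‖N i v‖ :=
      ContinuousLinearMap.le_opNorm _ _
    have h2 : ‖Matrix.toEuclideanCLM (𝕜 := ℂ) T (N i v)‖ = s i * ‖N i v‖ := by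
      rw [happ, norm_smul, hVnorm, Complex.norm_real, Real.norm_eq_abs,
        abs_of_pos (hs i)]
    have h3 : 0 < ‖N i v‖ := norm_pos_iff.mpr hv
    nlinarith
  have hmap : Matrix.toEuclideanCLM (𝕜 := ℂ)
      (∑ i, ∑ j,
        ((∫ lam in Set.Icc (0 : ℝ) 1,
            ((1 - lam) * (s i)⁻¹ + lam * (s j)⁻¹)⁻¹ ∂μ : ℝ) : ℂ) • (E i * U * E j))
      = ∑ i, ∑ j,
        ((∫ lam in Set.Icc (0 : ℝ) 1,
            ((1 - lam) * (s i)⁻¹ + lam * (s j)⁻¹)⁻¹ ∂μ : ℝ) : ℂ) • (N i * V * N j) := by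
    rw [map_sum]
    refine Finset.sum_congr rfl fun i _ => ?_
    rw [map_sum]
    refine Finset.sum_congr rfl fun j _ => ?_
    rw [_root_.map_smul, _root_.map_mul, _root_.map_mul]
  rw [hmap]
  -- integrability of the coefficients
  have hintR : ∀ i j : Fin k, MeasureTheory.Integrable
      (fun lam => ((1 - lam) * (s i)⁻¹ + lam * (s j)⁻¹)⁻¹)
      (μ.restrict (Set.Icc (0:ℝ) 1)) := by
    intro i j
    refine MeasureTheory.Integrable.mono' (integrable_const (s i + s j)) ?_ ?_
    · exact ((((measurable_const.sub measurable_id).mul_const _).add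
        (measurable_id.mul_const _)).inv).aestronglyMeasurable
    · filter_upwards [MeasureTheory.ae_restrict_mem measurableSet_Icc] with lam hlam
      obtain ⟨hl0, hl1⟩ := hlam
      have h1 : 0 < (s i)⁻¹ := inv_pos.mpr (hs i)
      have h2 : 0 < (s j)⁻¹ := inv_pos.mpr (hs j)
      have hub : ((1 - lam) * (s i)⁻¹ + lam * (s j)⁻¹)⁻¹ ≤ s i + s j := by
        rcases le_total ((s i)⁻¹) ((s j)⁻¹) with hc | hc
        · have hd : (s i)⁻¹ ≤ (1 - lam) * (s i)⁻¹ + lam * (s j)⁻¹ := by nlinarith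
          have := inv_anti₀ h1 hd
          rw [inv_inv] at this
          linarith [hs j]
        · have hd : (s j)⁻¹ ≤ (1 - lam) * (s i)⁻¹ + lam * (s j)⁻¹ := by nlinarith
          have := inv_anti₀ h2 hd
          rw [inv_inv] at this
          linarith [hs i]
      have hnn : 0 ≤ ((1 - lam) * (s i)⁻¹ + lam * (s j)⁻¹)⁻¹ := by
        apply inv_nonneg.mpr; nlinarith
      rw [Real.norm_eq_abs, abs_of_nonneg hnn]
      exact hub
  have hint : ∀ i j : Fin k, MeasureTheory.Integrable
      (fun lam => ((((1 - lam) * (s i)⁻¹ + lam * (s j)⁻¹)⁻¹ : ℝ) : ℂ) • (N i * V * N j))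
      (μ.restrict (Set.Icc (0:ℝ) 1)) :=
    fun i j => ((hintR i j).ofReal (𝕜 := ℂ)).smul_const _
  have hrepr : (∑ i, ∑ j,
        ((∫ lam in Set.Icc (0 : ℝ) 1,
            ((1 - lam) * (s i)⁻¹ + lam * (s j)⁻¹)⁻¹ ∂μ : ℝ) : ℂ) • (N i * V * N j))
      = ∫ lam in Set.Icc (0:ℝ) 1, (∑ i, ∑ j,
          ((((1 - lam) * (s i)⁻¹ + lam * (s j)⁻¹)⁻¹ : ℝ) : ℂ) • (N i * V * N j)) ∂μ := by
    have hterm : ∀ i j : Fin k,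
        ((∫ lam in Set.Icc (0 : ℝ) 1,
            ((1 - lam) * (s i)⁻¹ + lam * (s j)⁻¹)⁻¹ ∂μ : ℝ) : ℂ) • (N i * V * N j)
        = ∫ lam in Set.Icc (0:ℝ) 1,
            ((((1 - lam) * (s i)⁻¹ + lam * (s j)⁻¹)⁻¹ : ℝ) : ℂ) • (N i * V * N j) ∂μ := by
      intro i j
      rw [integral_smul_const]
      congr 1
      exact (integral_ofReal).symm
    simp_rw [hterm]
    calc ∑ i, ∑ j, ∫ lam in Set.Icc (0:ℝ) 1,
            ((((1 - lam) * (s i)⁻¹ + lam * (s j)⁻¹)⁻¹ : ℝ) : ℂ) • (N i * V * N j) ∂μ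
        = ∑ i, ∫ lam in Set.Icc (0:ℝ) 1, ∑ j,
            ((((1 - lam) * (s i)⁻¹ + lam * (s j)⁻¹)⁻¹ : ℝ) : ℂ) • (N i * V * N j) ∂μ :=
          Finset.sum_congr rfl fun i _ =>
            (MeasureTheory.integral_finset_sum _ (fun j _ => hint i j)).symm
      _ = ∫ lam in Set.Icc (0:ℝ) 1, ∑ i, ∑ j,
            ((((1 - lam) * (s i)⁻¹ + lam * (s j)⁻¹)⁻¹ : ℝ) : ℂ) • (N i * V * N j) ∂μ :=
          (MeasureTheory.integral_finset_sum _ (fun i _ =>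
            MeasureTheory.integrable_finset_sum _ (fun j _ => hint i j))).symm
  rw [hrepr]
  have hbound : ∀ lam ∈ Set.Icc (0:ℝ) 1,
      ‖∑ i, ∑ j, ((((1 - lam) * (s i)⁻¹ + lam * (s j)⁻¹)⁻¹ : ℝ) : ℂ) • (N i * V * N j)‖
        ≤ S :=
    fun lam hlam => core S hS0 V hVnorm N hadj horth hsum s hs hsS lam hlam.1 hlam.2
  calc ‖∫ lam in Set.Icc (0:ℝ) 1, (∑ i, ∑ j,
          ((((1 - lam) * (s i)⁻¹ + lam * (s j)⁻¹)⁻¹ : ℝ) : ℂ) • (N i * V * N j)) ∂μ‖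
      ≤ S * (μ (Set.Icc (0:ℝ) 1)).toReal := by
        refine MeasureTheory.norm_setIntegral_le_of_norm_le_const_ae' (measure_lt_top μ _)
          ?_
        exact Filter.Eventually.of_forall hbound
    _ = S := by rw [hμ]; simp
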